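/- arXiv:1405.0804 — 8 statements merged into one kernel-verified Lean document; each statement's English description precedes it below -/
import Mathlib

section
/- Fix N ≥ 1 and continuous maps δ : ℝ^N → ℝ^N and β : ℝ^N → ℝ with β > 0 everywhere. Let B₀ > 0 and D₀ ≥ 0, and let (x,t) : [s₀,s₁] → ℝ^N × ℝ be a C¹ curve such that for all s: t'(s) > 0, |x'(s)|² + 2⟨δ(x(s)),x'(s)⟩t'(s) − β(x(s)) t'(s)² ≤ 0, β(x(s)) ≤ B₀ and |δ(x(s))| ≤ D₀. Then t(s₁) − t(s₀) ≥ (2D₀ + √B₀)^{-1} ∫_{s₀}^{s₁} |x'(s)| ds. In particular, if the Euclidean length of x is at least 1, then t(s₁) − t(s₀) ≥ (2D₀ + √B₀)^{-1} > 0. -/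
open Real Set RealInnerProductSpace

/-- A future-directed causal curve `(x,t)` for the standard stationary metric, whose
coefficients satisfy `β(x(s)) ≤ B₀` and `|δ(x(s))| ≤ D₀` along the curve, satisfies
`t(s₁) − t(s₀) ≥ (2D₀ + √B₀)⁻¹ ∫ |x'|`; in particular, if the spatial length is at least
`1`, then `t(s₁) − t(s₀) ≥ (2D₀ + √B₀)⁻¹ > 0`. -/
theorem stmt_2 (N : ℕ) (hN : 1 ≤ N)
    (δ : EuclideanSpace ℝ (Fin N) → EuclideanSpace ℝ (Fin N))
    (β : EuclideanSpace ℝ (Fin N) → ℝ)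
    (hδ : Continuous δ) (hβ : Continuous β) (hβpos : ∀ y, 0 < β y)
    (B₀ D₀ : ℝ) (hB₀ : 0 < B₀) (hD₀ : 0 ≤ D₀)
    (s₀ s₁ : ℝ) (hs : s₀ ≤ s₁)
    (x x' : ℝ → EuclideanSpace ℝ (Fin N)) (t t' : ℝ → ℝ)
    (hx : ∀ s, HasDerivAt x (x' s) s) (hx' : Continuous x')
    (ht : ∀ s, HasDerivAt t (t' s) s) (ht' : Continuous t')
    (htpos : ∀ s ∈ Set.Icc s₀ s₁, 0 < t' s)
    (hcausal : ∀ s ∈ Set.Icc s₀ s₁,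
      ‖x' s‖ ^ 2 + 2 * ⟪δ (x s), x' s⟫ * t' s - β (x s) * t' s ^ 2 ≤ 0)
    (hβb : ∀ s ∈ Set.Icc s₀ s₁, β (x s) ≤ B₀)
    (hδb : ∀ s ∈ Set.Icc s₀ s₁, ‖δ (x s)‖ ≤ D₀) :
    (2 * D₀ + Real.sqrt B₀)⁻¹ * (∫ s in s₀..s₁, ‖x' s‖) ≤ t s₁ - t s₀ ∧
    ((1 : ℝ) ≤ (∫ s in s₀..s₁, ‖x' s‖) →
      (2 * D₀ + Real.sqrt B₀)⁻¹ ≤ t s₁ - t s₀ ∧ 0 < (2 * D₀ + Real.sqrt B₀)⁻¹) := by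
  have hsqB : 0 < Real.sqrt B₀ := Real.sqrt_pos.mpr hB₀
  have hcpos : 0 < 2 * D₀ + Real.sqrt B₀ := by linarith
  -- pointwise bound ‖x' s‖ ≤ (2D₀+√B₀) t' s
  have key : ∀ s ∈ Set.Icc s₀ s₁, ‖x' s‖ ≤ (2 * D₀ + Real.sqrt B₀) * t' s := by
    intro s hsmem
    have hT := htpos s hsmem
    have hc := hcausal s hsmem
    have hinner : -⟪δ (x s), x' s⟫ ≤ D₀ * ‖x' s‖ := by
      have := abs_real_inner_le_norm (δ (x s)) (x' s)
      have hb := hδb s hsmem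
      have : |⟪δ (x s), x' s⟫| ≤ D₀ * ‖x' s‖ :=
        this.trans (mul_le_mul_of_nonneg_right hb (norm_nonneg _))
      linarith [neg_abs_le ⟪δ (x s), x' s⟫]
    have hquad : ‖x' s‖ ^ 2 ≤ 2 * D₀ * t' s * ‖x' s‖ + B₀ * t' s ^ 2 := by
      have hb := hβb s hsmem
      nlinarith [sq_nonneg (t' s), hT.le]
    rcases le_or_gt (‖x' s‖) (Real.sqrt B₀ * t' s) with h | h
    · nlinarith
    · have hxpos : 0 < ‖x' s‖ := lt_of_le_of_lt (by positivity) h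
      have hB : B₀ * t' s ^ 2 ≤ Real.sqrt B₀ * t' s * ‖x' s‖ := by
        have hsq : B₀ = Real.sqrt B₀ * Real.sqrt B₀ := (Real.mul_self_sqrt hB₀.le).symm
        have h2 : Real.sqrt B₀ * t' s * (Real.sqrt B₀ * t' s) ≤ Real.sqrt B₀ * t' s * ‖x' s‖ :=
          mul_le_mul_of_nonneg_left h.le (by positivity)
        nlinarith [h2]
      have : ‖x' s‖ ^ 2 ≤ (2 * D₀ + Real.sqrt B₀) * t' s * ‖x' s‖ := by nlinarith
      nlinarith
  -- integrate
  have hint_t : (∫ s in s₀..s₁, t' s) = t s₁ - t s₀ :=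
    intervalIntegral.integral_eq_sub_of_hasDerivAt (fun s _ => ht s)
      (ht'.intervalIntegrable s₀ s₁)
  have hmono : (∫ s in s₀..s₁, ‖x' s‖) ≤ ∫ s in s₀..s₁, (2 * D₀ + Real.sqrt B₀) * t' s := by
    apply intervalIntegral.integral_mono_on hs
    · exact (hx'.norm).intervalIntegrable s₀ s₁
    · exact ((continuous_const.mul ht')).intervalIntegrable s₀ s₁
    · exact key
  have hmain : (2 * D₀ + Real.sqrt B₀)⁻¹ * (∫ s in s₀..s₁, ‖x' s‖) ≤ t s₁ - t s₀ := by
    rw [intervalIntegral.integral_const_mul, hint_t] at hmono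
    rw [inv_mul_le_iff₀ hcpos]
    linarith
  refine ⟨hmain, fun h1 => ⟨?_, by positivity⟩⟩
  calc (2 * D₀ + Real.sqrt B₀)⁻¹ = (2 * D₀ + Real.sqrt B₀)⁻¹ * 1 := (mul_one _).symm
    _ ≤ (2 * D₀ + Real.sqrt B₀)⁻¹ * (∫ s in s₀..s₁, ‖x' s‖) := by
        apply mul_le_mul_of_nonneg_left h1 (by positivity)
    _ ≤ t s₁ - t s₀ := hmain
end

section
/- Fix N ≥ 1, continuous maps δ : ℝ^N → ℝ^N and β : ℝ^N → ℝ with β > 0 everywhere, a C¹ curve x : [0,1] → ℝ^N and t_p ∈ ℝ. Define t^l(s) = t_p + ∫₀^s [⟨δ(x(r)),x'(r)⟩ + √(⟨δ(x(r)),x'(r)⟩² + |x'(r)|² β(x(r)))]/β(x(r)) dr. Then: (i) t^l is C¹ with t^l(0) = t_p and (t^l)'(s) ≥ 0 for all s, with (t^l)'(s) > 0 whenever x'(s) ≠ 0; (ii) for every s ∈ [0,1], |x'(s)|² + 2⟨δ(x(s)),x'(s)⟩ (t^l)'(s) − β(x(s)) ((t^l)'(s))² = 0; (iii) t^l is the unique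 C¹ function t : [0,1] → ℝ with t(0) = t_p, t'(s) ≥ 0 for all s, satisfying the equation in (ii); (iv) if x is non-constant then T(x) := t^l(1) − t^l(0) = ∫₀¹ ⟨δ(x),x'⟩/β(x) ds + ∫₀¹ √(⟨δ(x),x'⟩² + |x'|² β(x))/β(x) ds > 0. -/
open Real Set RealInnerProductSpace

private lemma quad_root_aux {a b2 y bv : ℝ} (hbv : 0 < bv) (hb2 : 0 ≤ b2)
    (hb2a : b2 = 0 → a = 0) (hy : 0 ≤ y)
    (heq : b2 + 2 * a * y - bv * y ^ 2 = 0) :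
    y = (a + Real.sqrt (a ^ 2 + b2 * bv)) / bv := by
  have hD : 0 ≤ a ^ 2 + b2 * bv := by positivity
  have hsq : (bv * y - a) ^ 2 = a ^ 2 + b2 * bv := by linear_combination (-bv) * heq
  have habs : |bv * y - a| = Real.sqrt (a ^ 2 + b2 * bv) := by
    rw [← hsq, Real.sqrt_sq_eq_abs]
  have h1 : |a| ≤ Real.sqrt (a ^ 2 + b2 * bv) := by
    rw [← Real.sqrt_sq_eq_abs]
    exact Real.sqrt_le_sqrt (by nlinarith)
  rcases le_or_gt a (bv * y) with h | h
  · rw [abs_of_nonneg (by linarith)] at habs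
    field_simp
    linarith
  · rw [abs_of_neg (by linarith)] at habs
    have hby : bv * y ≤ 0 := by
      have := le_abs_self a
      linarith
    have hy0 : y = 0 := by nlinarith
    subst hy0
    have hb0 : b2 = 0 := by nlinarith
    have ha0 : a = 0 := hb2a hb0
    simp [hb0, ha0]

private lemma lightlike_alg {a b2 bv : ℝ} (hbv : 0 < bv) (hb2 : 0 ≤ b2) :
    b2 + 2 * a * ((a + Real.sqrt (a ^ 2 + b2 * bv)) / bv)
      - bv * ((a + Real.sqrt (a ^ 2 + b2 * bv)) / bv) ^ 2 = 0 := by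
  have hD : 0 ≤ a ^ 2 + b2 * bv := by positivity
  have hc2 := Real.sq_sqrt hD
  set c := Real.sqrt (a ^ 2 + b2 * bv) with hc
  have hbv' : bv ≠ 0 := hbv.ne'
  field_simp
  nlinarith [hc2]

/-- Coordinate form of Lemma 4.1 of the paper: the future-directed lightlike lift
`t^l(s) = t_p + ∫₀^s [⟨δ(x),x'⟩ + √(⟨δ(x),x'⟩² + |x'|²β(x))]/β(x)` of a spatial `C¹` curve
`x` is `C¹`, starts at `t_p`, has nonnegative derivative (positive where `x' ≠ 0`), is
lightlike for the standard stationary metric, is the unique such nondecreasing lift, and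
for non-constant `x` the arrival time `T(x) = t^l(1) − t^l(0)` is given by eq. (4.1) and is
positive. -/
theorem stmt_3 (N : ℕ) (hN : 1 ≤ N)
    (δ : EuclideanSpace ℝ (Fin N) → EuclideanSpace ℝ (Fin N))
    (β : EuclideanSpace ℝ (Fin N) → ℝ)
    (hδ : Continuous δ) (hβ : Continuous β) (hβpos : ∀ y, 0 < β y)
    (x x' : ℝ → EuclideanSpace ℝ (Fin N))
    (hx : ∀ s, HasDerivAt x (x' s) s) (hx' : Continuous x')
    (t_p : ℝ) :
    ∀ tl tl' : ℝ → ℝ,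
      (∀ s, tl s = t_p + ∫ r in (0:ℝ)..s,
        (⟪δ (x r), x' r⟫ + Real.sqrt (⟪δ (x r), x' r⟫ ^ 2 + ‖x' r‖ ^ 2 * β (x r))) / β (x r)) →
      (∀ s, tl' s =
        (⟪δ (x s), x' s⟫ + Real.sqrt (⟪δ (x s), x' s⟫ ^ 2 + ‖x' s‖ ^ 2 * β (x s))) / β (x s)) →
      -- (i) `t^l` is `C¹`, `t^l(0) = t_p`, `(t^l)' ≥ 0`, and `(t^l)' > 0` where `x' ≠ 0`
      ((tl 0 = t_p ∧ Continuous tl' ∧ (∀ s, HasDerivAt tl (tl' s) s) ∧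
          (∀ s, 0 ≤ tl' s) ∧ (∀ s, x' s ≠ 0 → 0 < tl' s)) ∧
      -- (ii) the lift is lightlike
        (∀ s ∈ Set.Icc (0:ℝ) 1,
          ‖x' s‖ ^ 2 + 2 * ⟪δ (x s), x' s⟫ * tl' s - β (x s) * tl' s ^ 2 = 0) ∧
      -- (iii) uniqueness among nondecreasing `C¹` lifts starting at `t_p`
        (∀ t t' : ℝ → ℝ, (∀ s ∈ Set.Icc (0:ℝ) 1, HasDerivAt t (t' s) s) → t 0 = t_p →
          (∀ s ∈ Set.Icc (0:ℝ) 1, 0 ≤ t' s) →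
          (∀ s ∈ Set.Icc (0:ℝ) 1,
            ‖x' s‖ ^ 2 + 2 * ⟪δ (x s), x' s⟫ * t' s - β (x s) * t' s ^ 2 = 0) →
          ∀ s ∈ Set.Icc (0:ℝ) 1, t s = tl s) ∧
      -- (iv) the arrival time of a non-constant curve is positive
        ((¬ ∀ s ∈ Set.Icc (0:ℝ) 1, x s = x 0) →
          tl 1 - tl 0 = (∫ s in (0:ℝ)..1, ⟪δ (x s), x' s⟫ / β (x s)) +
              (∫ s in (0:ℝ)..1,
                Real.sqrt (⟪δ (x s), x' s⟫ ^ 2 + ‖x' s‖ ^ 2 * β (x s)) / β (x s)) ∧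
          0 < tl 1 - tl 0)) := by
  intro tl tl' htl htl'
  -- notation
  have hxc : Continuous x := continuous_iff_continuousAt.mpr fun s => (hx s).continuousAt
  have hac : Continuous fun s => ⟪δ (x s), x' s⟫ := (hδ.comp hxc).inner hx'
  have hβxc : Continuous fun s => β (x s) := hβ.comp hxc
  have hβne : ∀ s, β (x s) ≠ 0 := fun s => (hβpos (x s)).ne'
  have hDc : Continuous fun s => ⟪δ (x s), x' s⟫ ^ 2 + ‖x' s‖ ^ 2 * β (x s) :=
    (hac.pow 2).add ((hx'.norm.pow 2).mul hβxc)
  have hsqc : Continuous fun s => Real.sqrt (⟪δ (x s), x' s⟫ ^ 2 + ‖x' s‖ ^ 2 * β (x s)) :=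
    Real.continuous_sqrt.comp hDc
  have hφc : Continuous fun s =>
      (⟪δ (x s), x' s⟫ + Real.sqrt (⟪δ (x s), x' s⟫ ^ 2 + ‖x' s‖ ^ 2 * β (x s))) / β (x s) :=
    (hac.add hsqc).div hβxc hβne
  have htl'c : Continuous tl' := by
    have : tl' = fun s =>
        (⟪δ (x s), x' s⟫ + Real.sqrt (⟪δ (x s), x' s⟫ ^ 2 + ‖x' s‖ ^ 2 * β (x s))) / β (x s) :=
      funext htl'
    rw [this]; exact hφc
  have hD0 : ∀ s, 0 ≤ ⟪δ (x s), x' s⟫ ^ 2 + ‖x' s‖ ^ 2 * β (x s) := fun s => by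
    have := (hβpos (x s)).le
    positivity
  have habsle : ∀ s, |⟪δ (x s), x' s⟫| ≤
      Real.sqrt (⟪δ (x s), x' s⟫ ^ 2 + ‖x' s‖ ^ 2 * β (x s)) := fun s => by
    rw [← Real.sqrt_sq_eq_abs]
    exact Real.sqrt_le_sqrt (by nlinarith [sq_nonneg ‖x' s‖, (hβpos (x s)).le, sq_nonneg ‖x' s‖ ])
  have hnum_nn : ∀ s, 0 ≤ ⟪δ (x s), x' s⟫ +
      Real.sqrt (⟪δ (x s), x' s⟫ ^ 2 + ‖x' s‖ ^ 2 * β (x s)) := fun s => by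
    have h1 := habsle s
    have h2 := neg_abs_le ⟪δ (x s), x' s⟫
    linarith
  have htl'nn : ∀ s, 0 ≤ tl' s := fun s => by
    rw [htl' s]; exact div_nonneg (hnum_nn s) (hβpos (x s)).le
  have htl'pos : ∀ s, x' s ≠ 0 → 0 < tl' s := fun s hs => by
    rw [htl' s]
    apply div_pos _ (hβpos (x s))
    have hb : 0 < ‖x' s‖ ^ 2 * β (x s) :=
      mul_pos (pow_pos (norm_pos_iff.mpr hs) 2) (hβpos (x s))
    have h1 : |⟪δ (x s), x' s⟫| <
        Real.sqrt (⟪δ (x s), x' s⟫ ^ 2 + ‖x' s‖ ^ 2 * β (x s)) := by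
      rw [← Real.sqrt_sq_eq_abs]
      exact Real.sqrt_lt_sqrt (sq_nonneg _) (by linarith)
    have h2 := neg_abs_le ⟪δ (x s), x' s⟫
    linarith
  have htl0 : tl 0 = t_p := by rw [htl 0]; simp
  have htlderiv : ∀ s, HasDerivAt tl (tl' s) s := fun s => by
    have htlE : tl = fun s => t_p + ∫ r in (0:ℝ)..s,
        (⟪δ (x r), x' r⟫ + Real.sqrt (⟪δ (x r), x' r⟫ ^ 2 + ‖x' r‖ ^ 2 * β (x r))) / β (x r) :=
      funext htl
    rw [htlE, htl' s]
    exact ((hφc.integral_hasStrictDerivAt 0 s).hasDerivAt).const_add t_p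
  -- (ii)
  have hii : ∀ s, ‖x' s‖ ^ 2 + 2 * ⟪δ (x s), x' s⟫ * tl' s - β (x s) * tl' s ^ 2 = 0 := fun s => by
    rw [htl' s]
    exact lightlike_alg (hβpos (x s)) (sq_nonneg _)
  refine ⟨⟨htl0, htl'c, htlderiv, htl'nn, htl'pos⟩, fun s _ => hii s, ?_, ?_⟩
  · -- (iii) uniqueness
    intro t t' ht ht0 htnn hteq s hs
    have hder0 : ∀ u ∈ Set.Icc (0:ℝ) 1, HasDerivAt (fun r => t r - tl r) 0 u := by
      intro u hu
      have hb2a : ‖x' u‖ ^ 2 = 0 → ⟪δ (x u), x' u⟫ = 0 := by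
        intro h
        have : x' u = 0 := by
          have := (pow_eq_zero_iff (two_ne_zero)).mp h
          simpa [norm_eq_zero] using this
        simp [this]
      have ht'u : t' u =
          (⟪δ (x u), x' u⟫ + Real.sqrt (⟪δ (x u), x' u⟫ ^ 2 + ‖x' u‖ ^ 2 * β (x u))) / β (x u) :=
        quad_root_aux (hβpos (x u)) (sq_nonneg _) hb2a (htnn u hu) (hteq u hu)
      have : t' u = tl' u := by rw [ht'u, htl' u]
      have h := (ht u hu).sub (htlderiv u)
      rw [this, sub_self] at h
      exact h
    have hcont : ContinuousOn (fun r => t r - tl r) (Set.Icc 0 1) := fun u hu =>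
      ((hder0 u hu).continuousAt).continuousWithinAt
    have := constant_of_has_deriv_right_zero hcont
      (fun u hu => ((hder0 u (Set.Ico_subset_Icc_self hu)).hasDerivWithinAt)) s hs
    simp only [ht0, htl0] at this
    linarith
  · -- (iv)
    intro hnc
    set φ : ℝ → ℝ := fun s =>
      (⟪δ (x s), x' s⟫ + Real.sqrt (⟪δ (x s), x' s⟫ ^ 2 + ‖x' s‖ ^ 2 * β (x s))) / β (x s)
      with hφdef
    have hφ : ∀ s, tl' s = φ s := htl'
    have hTeq : tl 1 - tl 0 = ∫ s in (0:ℝ)..1, φ s := by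
      rw [htl 1, htl0]; ring
    have hsplit : (∫ s in (0:ℝ)..1, φ s)
        = (∫ s in (0:ℝ)..1, ⟪δ (x s), x' s⟫ / β (x s)) +
          (∫ s in (0:ℝ)..1,
            Real.sqrt (⟪δ (x s), x' s⟫ ^ 2 + ‖x' s‖ ^ 2 * β (x s)) / β (x s)) := by
      simp only [hφdef, add_div]
      exact intervalIntegral.integral_add
        ((hac.div hβxc hβne).intervalIntegrable 0 1)
        ((hsqc.div hβxc hβne).intervalIntegrable 0 1)
    refine ⟨by rw [hTeq, hsplit], ?_⟩
    -- positivity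
    have hex : ∃ s₀ ∈ Set.Icc (0:ℝ) 1, x' s₀ ≠ 0 := by
      by_contra h
      push_neg at h
      exact hnc (fun s hs => constant_of_has_deriv_right_zero
        (fun u _ => (hx u).continuousAt.continuousWithinAt)
        (fun u hu => (h u (Set.Ico_subset_Icc_self hu)) ▸ (hx u).hasDerivWithinAt) s hs)
    obtain ⟨s₀, hs₀, hxs₀⟩ := hex
    have hφnn : ∀ s, 0 ≤ φ s := fun s => (hφ s) ▸ htl'nn s
    have hφpos : 0 < φ s₀ := (hφ s₀) ▸ htl'pos s₀ hxs₀
    have hU : IsOpen ({s | 0 < φ s} ∩ Ioo 0 1 : Set ℝ) :=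
      (isOpen_lt continuous_const hφc).inter isOpen_Ioo
    have hclos : s₀ ∈ closure (Ioo (0:ℝ) 1) := by
      rw [closure_Ioo (zero_ne_one)]; exact hs₀
    obtain ⟨c, hcpos, hcIoo⟩ := mem_closure_iff.mp hclos _
      (isOpen_lt continuous_const hφc) hφpos
    have hcU : c ∈ ({s | 0 < φ s} ∩ Ioo 0 1 : Set ℝ) := ⟨hcpos, hcIoo⟩
    obtain ⟨ε, hε, hball⟩ := Metric.isOpen_iff.mp hU c hcU
    set u := c - ε / 2 with hu
    set v := c + ε / 2 with hv
    have huv : u < v := by simp [hu, hv]; linarith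
    have hsub : Set.Icc u v ⊆ ({s | 0 < φ s} ∩ Ioo 0 1 : Set ℝ) := by
      intro z hz
      apply hball
      rw [Real.ball_eq_Ioo]
      exact ⟨by simp [hu] at hz ⊢; linarith [hz.1], by simp [hv] at hz ⊢; linarith [hz.2]⟩
    have huIoo : u ∈ Ioo (0:ℝ) 1 := (hsub ⟨le_refl u, huv.le⟩).2
    have hvIoo : v ∈ Ioo (0:ℝ) 1 := (hsub ⟨huv.le, le_refl v⟩).2
    have hInt : ∀ a b : ℝ, IntervalIntegrable φ MeasureTheory.volume a b :=
      fun a b => hφc.intervalIntegrable a b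
    have hdecomp : (∫ s in (0:ℝ)..1, φ s)
        = (∫ s in (0:ℝ)..u, φ s) + ((∫ s in u..v, φ s) + (∫ s in v..1, φ s)) := by
      rw [intervalIntegral.integral_add_adjacent_intervals (hInt u v) (hInt v 1),
        intervalIntegral.integral_add_adjacent_intervals (hInt 0 u) (hInt u 1)]
    have h1 : 0 ≤ ∫ s in (0:ℝ)..u, φ s :=
      intervalIntegral.integral_nonneg huIoo.1.le (fun r _ => hφnn r)
    have h3 : 0 ≤ ∫ s in v..1, φ s :=
      intervalIntegral.integral_nonneg hvIoo.2.le (fun r _ => hφnn r)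
    have h2 : 0 < ∫ s in u..v, φ s :=
      intervalIntegral.intervalIntegral_pos_of_pos_on (hInt u v)
        (fun z hz => (hsub (Set.Ioo_subset_Icc_self hz)).1) huv
    have : (0:ℝ) < ∫ s in (0:ℝ)..1, φ s := by rw [hdecomp]; linarith
    rw [hTeq]
    exact this
end

section
/- Fix N ≥ 1, continuous maps δ : ℝ^N → ℝ^N and β : ℝ^N → ℝ with β > 0 everywhere, and a C¹ curve x : [0,1] → ℝ^N; write h(s) = ⟨δ(x(s)),x'(s)⟩. Define T(x) = ∫₀¹ h/β(x) ds + ∫₀¹ √(h² + |x'|² β(x))/β(x) ds and T̃(x) = ∫₀¹ h/β(x) ds + √((∫₀¹ h²/β(x) ds + ∫₀¹ |x'|² ds) · ∫₀¹ 1/β(x) ds). Then 0 ≤ T(x) ≤ T̃(x). -/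
open Real Set RealInnerProductSpace MeasureTheory

private lemma cs_aux (f g : ℝ → ℝ) (hf : Continuous f) (hg : Continuous g)
    (hf0 : ∀ s, 0 ≤ f s) (hg0 : ∀ s, 0 ≤ g s) :
    ∫ s in (0:ℝ)..1, f s * g s ≤
      Real.sqrt ((∫ s in (0:ℝ)..1, f s ^ 2) * ∫ s in (0:ℝ)..1, g s ^ 2) := by
  have h01 : (0:ℝ) ≤ 1 := by norm_num
  rw [intervalIntegral.integral_of_le h01, intervalIntegral.integral_of_le h01,
    intervalIntegral.integral_of_le h01]
  set μ := volume.restrict (Ioc (0:ℝ) 1) with hμ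
  have h2 : ENNReal.ofReal (2:ℝ) = 2 := by norm_num
  have hmf : MemLp f (ENNReal.ofReal (2:ℝ)) μ := by
    rw [h2, memLp_two_iff_integrable_sq hf.aestronglyMeasurable.restrict]
    exact (hf.pow 2).integrableOn_Ioc
  have hmg : MemLp g (ENNReal.ofReal (2:ℝ)) μ := by
    rw [h2, memLp_two_iff_integrable_sq hg.aestronglyMeasurable.restrict]
    exact (hg.pow 2).integrableOn_Ioc
  have hconj : (2:ℝ).HolderConjugate 2 := by constructor <;> norm_num
  have key := integral_mul_le_Lp_mul_Lq_of_nonneg hconj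
    (Filter.Eventually.of_forall hf0) (Filter.Eventually.of_forall hg0) hmf hmg
  have hif : ∫ a, f a ^ (2:ℝ) ∂μ = ∫ a, f a ^ 2 ∂μ := by
    refine integral_congr_ae (Filter.Eventually.of_forall fun a => ?_)
    exact Real.rpow_two (f a)
  have hig : ∫ a, g a ^ (2:ℝ) ∂μ = ∫ a, g a ^ 2 ∂μ := by
    refine integral_congr_ae (Filter.Eventually.of_forall fun a => ?_)
    exact Real.rpow_two (g a)
  rw [hif, hig] at key
  have hnf : 0 ≤ ∫ a, f a ^ 2 ∂μ := integral_nonneg fun a => sq_nonneg _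
  have hng : 0 ≤ ∫ a, g a ^ 2 ∂μ := integral_nonneg fun a => sq_nonneg _
  calc ∫ s in Ioc (0:ℝ) 1, f s * g s ≤ _ := key
    _ = Real.sqrt ((∫ s in Ioc (0:ℝ) 1, f s ^ 2) * ∫ s in Ioc (0:ℝ) 1, g s ^ 2) := by
        rw [Real.sqrt_eq_rpow, Real.mul_rpow hnf hng]

/-- Eq. (4.8) of the paper: with `h(s) = ⟨δ(x(s)),x'(s)⟩`, the arrival-time functional
`T(x) = ∫ h/β + ∫ √(h² + |x'|²β)/β` and the auxiliary quantity
`T̃(x) = ∫ h/β + √((∫ h²/β + ∫ |x'|²) ∫ 1/β)` satisfy `0 ≤ T(x) ≤ T̃(x)`. -/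
theorem stmt_5 (N : ℕ) (hN : 1 ≤ N)
    (δ : EuclideanSpace ℝ (Fin N) → EuclideanSpace ℝ (Fin N))
    (β : EuclideanSpace ℝ (Fin N) → ℝ)
    (hδ : Continuous δ) (hβ : Continuous β) (hβpos : ∀ y, 0 < β y)
    (x x' : ℝ → EuclideanSpace ℝ (Fin N))
    (hx : ∀ s, HasDerivAt x (x' s) s) (hx' : Continuous x') :
    ∀ h : ℝ → ℝ, (∀ s, h s = ⟪δ (x s), x' s⟫) →
    ∀ T Ttilde : ℝ,
      T = (∫ s in (0:ℝ)..1, h s / β (x s))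
        + (∫ s in (0:ℝ)..1, Real.sqrt (h s ^ 2 + ‖x' s‖ ^ 2 * β (x s)) / β (x s)) →
      Ttilde = (∫ s in (0:ℝ)..1, h s / β (x s))
        + Real.sqrt (((∫ s in (0:ℝ)..1, h s ^ 2 / β (x s)) + ∫ s in (0:ℝ)..1, ‖x' s‖ ^ 2)
            * ∫ s in (0:ℝ)..1, 1 / β (x s)) →
      0 ≤ T ∧ T ≤ Ttilde := by
  intro h hh T Ttilde hT hTt
  have hxc : Continuous x := by
    rw [continuous_iff_continuousAt]; exact fun s => (hx s).continuousAt
  set c : ℝ → ℝ := fun s => β (x s) with hc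
  have hcc : Continuous c := hβ.comp hxc
  have hcpos : ∀ s, 0 < c s := fun s => hβpos (x s)
  have hhc : Continuous h := by
    have : h = fun s => ⟪δ (x s), x' s⟫ := funext hh
    rw [this]; exact (hδ.comp hxc).inner hx'
  set f : ℝ → ℝ := fun s => Real.sqrt (h s ^ 2 / c s + ‖x' s‖ ^ 2) with hf
  set g : ℝ → ℝ := fun s => Real.sqrt (1 / c s) with hg
  have hfarg : ∀ s, 0 ≤ h s ^ 2 / c s + ‖x' s‖ ^ 2 := fun s =>
    add_nonneg (div_nonneg (sq_nonneg _) (hcpos s).le) (sq_nonneg _)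
  have hfc : Continuous f := (((hhc.pow 2).div hcc fun s => (hcpos s).ne').add
      ((hx'.norm).pow 2)).sqrt
  have hgc : Continuous g := (continuous_const.div hcc fun s => (hcpos s).ne').sqrt
  -- pointwise identity
  have hpt : ∀ s, Real.sqrt (h s ^ 2 + ‖x' s‖ ^ 2 * c s) / c s = f s * g s := by
    intro s
    have hb := hcpos s
    rw [hf, hg]
    rw [← Real.sqrt_mul (hfarg s)]
    have harg : (h s ^ 2 / c s + ‖x' s‖ ^ 2) * (1 / c s)
        = (h s ^ 2 + ‖x' s‖ ^ 2 * c s) / c s ^ 2 := by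
      rw [div_add' _ _ _ hb.ne', div_mul_div_comm, mul_one, ← sq]
    rw [harg, Real.sqrt_div (by positivity) (c s ^ 2), Real.sqrt_sq hb.le]
  -- nonnegativity of combined integrand
  have hintnn : ∀ s, 0 ≤ h s / c s + Real.sqrt (h s ^ 2 + ‖x' s‖ ^ 2 * c s) / c s := by
    intro s
    have hb := hcpos s
    have h1 : -(h s) ≤ Real.sqrt (h s ^ 2 + ‖x' s‖ ^ 2 * c s) := by
      calc -(h s) ≤ |h s| := neg_le_abs _
        _ = Real.sqrt (h s ^ 2) := (Real.sqrt_sq_eq_abs _).symm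
        _ ≤ _ := Real.sqrt_le_sqrt (by nlinarith [sq_nonneg ‖x' s‖, hb.le])
    have h2 : 0 ≤ (h s + Real.sqrt (h s ^ 2 + ‖x' s‖ ^ 2 * c s)) / c s :=
      div_nonneg (by linarith) hb.le
    rwa [add_div] at h2
  -- integrability
  have i1 : IntervalIntegrable (fun s => h s / c s) volume 0 1 :=
    ((hhc.div hcc fun s => (hcpos s).ne')).intervalIntegrable 0 1
  have i2 : IntervalIntegrable
      (fun s => Real.sqrt (h s ^ 2 + ‖x' s‖ ^ 2 * c s) / c s) volume 0 1 :=
    ((((hhc.pow 2).add ((hx'.norm.pow 2).mul hcc)).sqrt).div hcc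
      fun s => (hcpos s).ne').intervalIntegrable 0 1
  constructor
  · rw [hT, ← intervalIntegral.integral_add i1 i2]
    exact intervalIntegral.integral_nonneg (by norm_num) fun s _ => hintnn s
  · rw [hT, hTt]
    apply add_le_add_right
    have e1 : (∫ s in (0:ℝ)..1, Real.sqrt (h s ^ 2 + ‖x' s‖ ^ 2 * c s) / c s)
        = ∫ s in (0:ℝ)..1, f s * g s :=
      intervalIntegral.integral_congr fun s _ => hpt s
    have e2 : (∫ s in (0:ℝ)..1, f s ^ 2)
        = (∫ s in (0:ℝ)..1, h s ^ 2 / c s) + ∫ s in (0:ℝ)..1, ‖x' s‖ ^ 2 := by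
      have : (∫ s in (0:ℝ)..1, f s ^ 2)
          = ∫ s in (0:ℝ)..1, (h s ^ 2 / c s + ‖x' s‖ ^ 2) :=
        intervalIntegral.integral_congr fun s _ => Real.sq_sqrt (hfarg s)
      have j1 : IntervalIntegrable (fun s => h s ^ 2 / c s) volume 0 1 :=
        ((hhc.pow 2).div hcc fun s => (hcpos s).ne').intervalIntegrable 0 1
      have j2 : IntervalIntegrable (fun s => ‖x' s‖ ^ 2) volume 0 1 :=
        (hx'.norm.pow 2).intervalIntegrable 0 1
      rw [this, intervalIntegral.integral_add j1 j2]
    have e3 : (∫ s in (0:ℝ)..1, g s ^ 2) = ∫ s in (0:ℝ)..1, 1 / c s :=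
      intervalIntegral.integral_congr fun s _ =>
        Real.sq_sqrt (div_nonneg zero_le_one (hcpos s).le)
    calc (∫ s in (0:ℝ)..1, Real.sqrt (h s ^ 2 + ‖x' s‖ ^ 2 * c s) / c s)
        = ∫ s in (0:ℝ)..1, f s * g s := e1
      _ ≤ Real.sqrt ((∫ s in (0:ℝ)..1, f s ^ 2) * ∫ s in (0:ℝ)..1, g s ^ 2) :=
          cs_aux f g hfc hgc (fun s => Real.sqrt_nonneg _) (fun s => Real.sqrt_nonneg _)
      _ = _ := by rw [e2, e3]
end

section
/- Fix N ≥ 1, continuous maps δ : ℝ^N → ℝ^N and β : ℝ^N → ℝ with β > 0 everywhere, Δ_t ∈ ℝ, constants 0 < b₁ ≤ b₂ and D ≥ 0, and a C¹ curve x : [0,1] → ℝ^N such that b₁ ≤ β(x(s)) ≤ b₂ and |δ(x(s))| ≤ D for all s ∈ [0,1]. Then 2𝒥(x) ≥ ∫₀¹|x'|² ds − 2|Δ_t| (D b₂ / b₁) (∫₀¹|x'|² ds)^{1/2} − Δ_t² b₂. -/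
open Real Set RealInnerProductSpace

private lemma cs_aux_s7 (u w : ℝ → ℝ) (hu : Continuous u) (hw : Continuous w)
    (hw0 : ∀ s, 0 ≤ w s) (t : ℝ) :
    0 ≤ (∫ s in (0:ℝ)..1, u s ^ 2 * w s) - 2 * t * (∫ s in (0:ℝ)..1, u s * w s)
        + t ^ 2 * (∫ s in (0:ℝ)..1, w s) := by
  have h0 : (0:ℝ) ≤ ∫ s in (0:ℝ)..1, (u s - t) ^ 2 * w s :=
    intervalIntegral.integral_nonneg zero_le_one
      (fun s _ => mul_nonneg (sq_nonneg _) (hw0 s))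
  have hi1 : IntervalIntegrable (fun s => u s ^ 2 * w s) MeasureTheory.volume 0 1 :=
    ((hu.pow 2).mul hw).intervalIntegrable _ _
  have hi2 : IntervalIntegrable (fun s => 2 * t * (u s * w s)) MeasureTheory.volume 0 1 :=
    (continuous_const.mul (hu.mul hw)).intervalIntegrable _ _
  have hi3 : IntervalIntegrable (fun s => t ^ 2 * w s) MeasureTheory.volume 0 1 :=
    (continuous_const.mul hw).intervalIntegrable _ _
  have key : (∫ s in (0:ℝ)..1, (u s - t) ^ 2 * w s)
      = (∫ s in (0:ℝ)..1, u s ^ 2 * w s) - 2 * t * (∫ s in (0:ℝ)..1, u s * w s)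
        + t ^ 2 * (∫ s in (0:ℝ)..1, w s) := by
    have h1 : ∀ s : ℝ, (u s - t) ^ 2 * w s
        = u s ^ 2 * w s - 2 * t * (u s * w s) + t ^ 2 * w s := fun s => by ring
    simp only [h1]
    rw [intervalIntegral.integral_add (hi1.sub hi2) hi3,
      intervalIntegral.integral_sub hi1 hi2,
      intervalIntegral.integral_const_mul, intervalIntegral.integral_const_mul]
  linarith [key ▸ h0]

/-- Claim 1 of the proof of Theorem 4.2 of the paper: if along the curve `x` one has
`b₁ ≤ β(x(s)) ≤ b₂` and `|δ(x(s))| ≤ D`, then the restricted action `𝒥(x)` of eq. (4.5)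
satisfies `2𝒥(x) ≥ ∫|x'|² − 2|Δ_t| (D b₂/b₁) (∫|x'|²)^{1/2} − Δ_t² b₂`. -/
theorem stmt_7 (N : ℕ) (hN : 1 ≤ N)
    (δ : EuclideanSpace ℝ (Fin N) → EuclideanSpace ℝ (Fin N))
    (β : EuclideanSpace ℝ (Fin N) → ℝ)
    (hδ : Continuous δ) (hβ : Continuous β) (hβpos : ∀ y, 0 < β y)
    (Δt : ℝ) (b₁ b₂ D : ℝ) (hb₁ : 0 < b₁) (hb₁₂ : b₁ ≤ b₂) (hD : 0 ≤ D)
    (x x' : ℝ → EuclideanSpace ℝ (Fin N))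
    (hx : ∀ s, HasDerivAt x (x' s) s) (hx' : Continuous x')
    (hβb : ∀ s ∈ Set.Icc (0:ℝ) 1, b₁ ≤ β (x s) ∧ β (x s) ≤ b₂)
    (hδb : ∀ s ∈ Set.Icc (0:ℝ) 1, ‖δ (x s)‖ ≤ D) :
    ∀ h : ℝ → ℝ, (∀ s, h s = ⟪δ (x s), x' s⟫) →
    ∀ J : ℝ, J = (1/2) * (∫ s in (0:ℝ)..1, ‖x' s‖ ^ 2)
        + (1/2) * ((∫ s in (0:ℝ)..1, h s ^ 2 / β (x s))
          - (∫ s in (0:ℝ)..1, h s / β (x s)) ^ 2 * (∫ s in (0:ℝ)..1, 1 / β (x s))⁻¹)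
        - (Δt / 2) * (Δt - 2 * ∫ s in (0:ℝ)..1, h s / β (x s))
          * (∫ s in (0:ℝ)..1, 1 / β (x s))⁻¹ →
    (∫ s in (0:ℝ)..1, ‖x' s‖ ^ 2)
        - 2 * |Δt| * (D * b₂ / b₁) * Real.sqrt (∫ s in (0:ℝ)..1, ‖x' s‖ ^ 2)
        - Δt ^ 2 * b₂ ≤ 2 * J := by
  intro h hh J hJ
  have hb₂ : (0:ℝ) < b₂ := lt_of_lt_of_le hb₁ hb₁₂
  have cx : Continuous x := continuous_iff_continuousAt.2 fun s => (hx s).continuousAt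
  have ch : Continuous h := by
    have he : h = fun s => ⟪δ (x s), x' s⟫ := funext hh
    rw [he]; exact (hδ.comp cx).inner hx'
  have cβ : Continuous fun s => β (x s) := hβ.comp cx
  have cβne : ∀ s : ℝ, β (x s) ≠ 0 := fun s => (hβpos _).ne'
  have cw : Continuous fun s => 1 / β (x s) := continuous_const.div cβ cβne
  have cn : Continuous fun s => ‖x' s‖ := hx'.norm
  -- lower bound on R
  have hRlb : 1 / b₂ ≤ ∫ s in (0:ℝ)..1, 1 / β (x s) := by
    have e : (1:ℝ)/b₂ = ∫ s in (0:ℝ)..1, (1/b₂ : ℝ) := by simp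
    rw [e]
    exact intervalIntegral.integral_mono_on zero_le_one intervalIntegrable_const
      (cw.intervalIntegrable _ _)
      (fun s hs => one_div_le_one_div_of_le (hβpos _) (hβb s hs).2)
  have hRpos : 0 < ∫ s in (0:ℝ)..1, 1 / β (x s) :=
    lt_of_lt_of_le (by positivity) hRlb
  have hRinv : (∫ s in (0:ℝ)..1, 1 / β (x s))⁻¹ ≤ b₂ := by
    rw [inv_le_comm₀ hRpos hb₂]
    exact le_trans (by rw [one_div]) hRlb
  have hRinvpos : 0 < (∫ s in (0:ℝ)..1, 1 / β (x s))⁻¹ := inv_pos.2 hRpos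
  -- Cauchy–Schwarz : Q² R⁻¹ ≤ P
  have hCS : 0 ≤ (∫ s in (0:ℝ)..1, h s ^ 2 / β (x s))
      - (∫ s in (0:ℝ)..1, h s / β (x s)) ^ 2 * (∫ s in (0:ℝ)..1, 1 / β (x s))⁻¹ := by
    have key := cs_aux_s7 h (fun s => 1 / β (x s)) ch cw (fun s => le_of_lt (div_pos one_pos (hβpos _)))
      ((∫ s in (0:ℝ)..1, h s / β (x s)) * (∫ s in (0:ℝ)..1, 1 / β (x s))⁻¹)
    simp only [mul_one_div] at key
    have hR1 : (∫ s in (0:ℝ)..1, 1 / β (x s))⁻¹ * (∫ s in (0:ℝ)..1, 1 / β (x s)) = 1 :=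
      inv_mul_cancel₀ hRpos.ne'
    nlinarith [key, hR1]
  -- ∫‖x'‖ ≤ √A
  have hA0 : 0 ≤ ∫ s in (0:ℝ)..1, ‖x' s‖ ^ 2 :=
    intervalIntegral.integral_nonneg zero_le_one (fun s _ => sq_nonneg _)
  have hB0 : 0 ≤ ∫ s in (0:ℝ)..1, ‖x' s‖ :=
    intervalIntegral.integral_nonneg zero_le_one (fun s _ => norm_nonneg _)
  have hB2 : (∫ s in (0:ℝ)..1, ‖x' s‖) ^ 2 ≤ ∫ s in (0:ℝ)..1, ‖x' s‖ ^ 2 := by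
    have key := cs_aux_s7 (fun s => ‖x' s‖) (fun _ => 1) cn continuous_const
      (fun _ => zero_le_one) (∫ s in (0:ℝ)..1, ‖x' s‖)
    simp only [mul_one, intervalIntegral.integral_const, smul_eq_mul, sub_zero] at key
    nlinarith [key]
  have hBle : (∫ s in (0:ℝ)..1, ‖x' s‖) ≤ Real.sqrt (∫ s in (0:ℝ)..1, ‖x' s‖ ^ 2) :=
    (Real.le_sqrt hB0 hA0).2 hB2
  -- bound on |Q|
  have hhb : ∀ s ∈ Icc (0:ℝ) 1, |h s| ≤ D * ‖x' s‖ := by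
    intro s hs
    rw [hh]
    exact le_trans (abs_real_inner_le_norm _ _)
      (mul_le_mul_of_nonneg_right (hδb s hs) (norm_nonneg _))
  have hQabs : |∫ s in (0:ℝ)..1, h s / β (x s)|
      ≤ (D / b₁) * ∫ s in (0:ℝ)..1, ‖x' s‖ := by
    have h1 : |∫ s in (0:ℝ)..1, h s / β (x s)| ≤ ∫ s in (0:ℝ)..1, |h s / β (x s)| :=
      intervalIntegral.abs_integral_le_integral_abs zero_le_one
    have h2 : (∫ s in (0:ℝ)..1, |h s / β (x s)|)
        ≤ ∫ s in (0:ℝ)..1, (D / b₁) * ‖x' s‖ := by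
      apply intervalIntegral.integral_mono_on zero_le_one
        (((ch.div cβ cβne).abs).intervalIntegrable _ _)
        ((continuous_const.mul cn).intervalIntegrable _ _)
      intro s hs
      simp only [Pi.div_apply, Pi.mul_apply]
      rw [abs_div, abs_of_pos (hβpos (x s)), div_mul_eq_mul_div]
      exact div_le_div₀ (by positivity) (hhb s hs) hb₁ (hβb s hs).1
    calc |∫ s in (0:ℝ)..1, h s / β (x s)| ≤ _ := h1
      _ ≤ _ := h2
      _ = (D / b₁) * ∫ s in (0:ℝ)..1, ‖x' s‖ := intervalIntegral.integral_const_mul _ _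
  have hQle : |∫ s in (0:ℝ)..1, h s / β (x s)|
      ≤ (D / b₁) * Real.sqrt (∫ s in (0:ℝ)..1, ‖x' s‖ ^ 2) :=
    le_trans hQabs (mul_le_mul_of_nonneg_left hBle (by positivity))
  -- final combination
  set A := ∫ s in (0:ℝ)..1, ‖x' s‖ ^ 2 with hAdef
  set P := ∫ s in (0:ℝ)..1, h s ^ 2 / β (x s) with hPdef
  set Q := ∫ s in (0:ℝ)..1, h s / β (x s) with hQdef
  set R := ∫ s in (0:ℝ)..1, 1 / β (x s) with hRdef
  have h2J : 2 * J = A + (P - Q ^ 2 * R⁻¹) - Δt ^ 2 * R⁻¹ + 2 * Δt * Q * R⁻¹ := by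
    rw [hJ]; ring
  have hsq0 : 0 ≤ Real.sqrt A := Real.sqrt_nonneg _
  have hQ0 : 0 ≤ |Q| := abs_nonneg _
  have hDt0 : 0 ≤ |Δt| := abs_nonneg _
  have hterm1 : Δt ^ 2 * R⁻¹ ≤ Δt ^ 2 * b₂ :=
    mul_le_mul_of_nonneg_left hRinv (sq_nonneg _)
  have hterm2 : -(|Δt| * |Q| * R⁻¹) ≤ Δt * Q * R⁻¹ := by
    have := neg_abs_le (Δt * Q)
    rw [abs_mul] at this
    nlinarith [hRinvpos]
  have hterm3 : |Δt| * |Q| * R⁻¹ ≤ |Δt| * ((D / b₁) * Real.sqrt A) * b₂ := by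
    have h1 : |Δt| * |Q| ≤ |Δt| * ((D / b₁) * Real.sqrt A) :=
      mul_le_mul_of_nonneg_left hQle hDt0
    have h2 : 0 ≤ |Δt| * |Q| := mul_nonneg hDt0 hQ0
    calc |Δt| * |Q| * R⁻¹ ≤ |Δt| * |Q| * b₂ :=
          mul_le_mul_of_nonneg_left hRinv h2
      _ ≤ |Δt| * ((D / b₁) * Real.sqrt A) * b₂ :=
          mul_le_mul_of_nonneg_right h1 (le_of_lt hb₂)
  have heq : 2 * |Δt| * (D * b₂ / b₁) * Real.sqrt A
      = 2 * (|Δt| * ((D / b₁) * Real.sqrt A) * b₂) := by ring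
  rw [h2J, heq]
  linarith [hCS, hterm1, hterm2, hterm3]
end

section
/- Fix N ≥ 1, continuous maps δ : ℝ^N → ℝ^N and β : ℝ^N → ℝ with β > 0 everywhere, Δ_t ∈ ℝ, t_p ∈ ℝ, and a C¹ curve x : [0,1] → ℝ^N; write h(s) = ⟨δ(x(s)),x'(s)⟩ and set C = (∫₀¹ h/β(x) ds − Δ_t)(∫₀¹ 1/β(x) ds)^{-1} and t(s) = t_p + ∫₀^s (h(r) − C)/β(x(r)) dr. Then: (i) t(1) − t(0) = Δ_t; (ii) ⟨δ(x(s)),x'(s)⟩ − β(x(s)) t'(s) = C for all s; (iii) the action of the curve z = (x,t) for the standard stationary metric equals the restricted functional, i.e. (1/2)∫₀¹ (|x'|² + 2 h t' − β(x) (t')²) ds = 𝒥(x). -/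
open Real Set RealInnerProductSpace

/-- Coordinate form of the variational reduction (eqs. (4.2)–(4.5)) of the paper: with
`h(s) = ⟨δ(x(s)),x'(s)⟩`, `C = (∫ h/β − Δ_t)(∫ 1/β)⁻¹` and
`t(s) = t_p + ∫₀^s (h − C)/β(x)`, the lift `t` joins the prescribed time levels
(`t(1) − t(0) = Δ_t`), satisfies the conservation law `⟨δ(x),x'⟩ − β(x) t' ≡ C`, and the
action of `z = (x,t)` for the standard stationary metric equals the restricted functional
`𝒥(x)` of eq. (4.5). -/
theorem stmt_11 (N : ℕ) (hN : 1 ≤ N)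
    (δ : EuclideanSpace ℝ (Fin N) → EuclideanSpace ℝ (Fin N))
    (β : EuclideanSpace ℝ (Fin N) → ℝ)
    (hδ : Continuous δ) (hβ : Continuous β) (hβpos : ∀ y, 0 < β y)
    (Δt t_p : ℝ)
    (x x' : ℝ → EuclideanSpace ℝ (Fin N))
    (hx : ∀ s, HasDerivAt x (x' s) s) (hx' : Continuous x') :
    ∀ h : ℝ → ℝ, (∀ s, h s = ⟪δ (x s), x' s⟫) →
    ∀ C : ℝ, C = ((∫ s in (0:ℝ)..1, h s / β (x s)) - Δt)
        * (∫ s in (0:ℝ)..1, 1 / β (x s))⁻¹ →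
    ∀ t : ℝ → ℝ, (∀ s, t s = t_p + ∫ r in (0:ℝ)..s, (h r - C) / β (x r)) →
    -- (i) the lift joins the prescribed time levels
    (t 1 - t 0 = Δt) ∧
    -- (ii) the conservation law `⟨δ(x),x'⟩ − β(x) t' = C`
    (∀ s, HasDerivAt t ((h s - C) / β (x s)) s) ∧
    (∀ s, ⟪δ (x s), x' s⟫ - β (x s) * ((h s - C) / β (x s)) = C) ∧
    -- (iii) the action of `z = (x,t)` equals the restricted functional `𝒥(x)`
    ((1/2) * (∫ s in (0:ℝ)..1,
        (‖x' s‖ ^ 2 + 2 * h s * ((h s - C) / β (x s))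
          - β (x s) * ((h s - C) / β (x s)) ^ 2))
      = (1/2) * (∫ s in (0:ℝ)..1, ‖x' s‖ ^ 2)
        + (1/2) * ((∫ s in (0:ℝ)..1, h s ^ 2 / β (x s))
          - (∫ s in (0:ℝ)..1, h s / β (x s)) ^ 2 * (∫ s in (0:ℝ)..1, 1 / β (x s))⁻¹)
        - (Δt / 2) * (Δt - 2 * ∫ s in (0:ℝ)..1, h s / β (x s))
          * (∫ s in (0:ℝ)..1, 1 / β (x s))⁻¹) := by

  intro h hh C hC t ht
  have hxc : Continuous x := continuous_iff_continuousAt.2 fun s => (hx s).continuousAt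
  have hhc : Continuous h := by
    have : h = fun s => ⟪δ (x s), x' s⟫ := funext hh
    rw [this]; exact (hδ.comp hxc).inner hx'
  have hβc : Continuous fun s => β (x s) := hβ.comp hxc
  have hβne : ∀ s, β (x s) ≠ 0 := fun s => (hβpos _).ne'
  have hfc : Continuous fun s => (h s - C) / β (x s) :=
    (hhc.sub continuous_const).div hβc hβne
  have h1c : Continuous fun s => 1 / β (x s) := continuous_const.div hβc hβne
  have hhbc : Continuous fun s => h s / β (x s) := hhc.div hβc hβne
  have hh2c : Continuous fun s => h s ^ 2 / β (x s) := (hhc.pow 2).div hβc hβne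
  have hBpos : 0 < ∫ s in (0:ℝ)..1, 1 / β (x s) := by
    apply intervalIntegral.intervalIntegral_pos_of_pos_on
      (h1c.intervalIntegrable 0 1)
    · intro s _; exact div_pos one_pos (hβpos _)
    · norm_num
  have hBne : (∫ s in (0:ℝ)..1, 1 / β (x s)) ≠ 0 := hBpos.ne'
  have hsplit : (∫ s in (0:ℝ)..1, (h s - C) / β (x s))
      = (∫ s in (0:ℝ)..1, h s / β (x s)) - C * ∫ s in (0:ℝ)..1, 1 / β (x s) := by
    have e1 : ∀ s ∈ uIcc (0:ℝ) 1,
        (h s - C) / β (x s) = h s / β (x s) - C * (1 / β (x s)) := by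
      intro s _; rw [sub_div, mul_one_div]
    rw [intervalIntegral.integral_congr e1,
      intervalIntegral.integral_sub (hhbc.intervalIntegrable 0 1)
        ((h1c.intervalIntegrable 0 1).const_mul C),
      intervalIntegral.integral_const_mul]
  refine ⟨?_, ?_, ?_, ?_⟩
  · rw [ht 1, ht 0, intervalIntegral.integral_same, hsplit, hC]
    field_simp
    ring
  · intro s
    have : HasDerivAt (fun u => ∫ r in (0:ℝ)..u, (h r - C) / β (x r))
        ((h s - C) / β (x s)) s :=
      intervalIntegral.integral_hasDerivAt_right (hfc.intervalIntegrable 0 s)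
        (hfc.stronglyMeasurableAtFilter _ _) hfc.continuousAt
    have ht' : t = fun u => t_p + ∫ r in (0:ℝ)..u, (h r - C) / β (x r) := funext ht
    rw [ht']
    exact this.const_add t_p
  · intro s
    rw [← hh s, mul_div_cancel₀ _ (hβne s)]
    ring
  · have e3 : ∀ s ∈ uIcc (0:ℝ) 1,
        ‖x' s‖ ^ 2 + 2 * h s * ((h s - C) / β (x s))
          - β (x s) * ((h s - C) / β (x s)) ^ 2
        = ‖x' s‖ ^ 2 + h s ^ 2 / β (x s) - C ^ 2 * (1 / β (x s)) := by
      intro s _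
      field_simp [hβne s]
      ring
    rw [intervalIntegral.integral_congr e3,
      intervalIntegral.integral_sub
        (((show Continuous fun s => ‖x' s‖ ^ 2 from hx'.norm.pow 2).intervalIntegrable 0 1)
          |>.add (hh2c.intervalIntegrable 0 1))
        ((h1c.intervalIntegrable 0 1).const_mul (C ^ 2)),
      intervalIntegral.integral_add
        ((show Continuous fun s => ‖x' s‖ ^ 2 from hx'.norm.pow 2).intervalIntegrable 0 1)
        (hh2c.intervalIntegrable 0 1),
      intervalIntegral.integral_const_mul, hC]
    field_simp
    ring
end

section
/- Let D = {(u,0) ∈ ℝ² : −1 ≤ u ≤ 1} and let x = (x₁,x₂) : [0,1] → ℝ² \ D be a C¹ curve with x(0) = (0,−1) and x(1) = (0,1). Then there exist s₁, s₂ ∈ [0,1] with x₁'(s₁) > 0 and x₁'(s₂) < 0. Consequently, for every continuous function λ : ℝ² \ D → ℝ with λ > 0 everywhere, the function s ↦ λ(x(s)) x₁'(s) takes both positive and negative values; in particular it is not of constant sign, not identically zero, and not constant. -/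
open Real Set

/-- The core of counterexample (b) in Section 7 of the paper: along any `C¹` curve in
`ℝ² \ D`, `D = [−1,1] × {0}`, from `(0,−1)` to `(0,1)`, the derivative of the first
coordinate takes both a positive and a negative value; consequently, for every continuous
`λ > 0` on `ℝ² \ D`, the function `s ↦ λ(x(s)) x₁'(s)` takes both positive and negative
values, and in particular it is not constant. -/
theorem stmt_14 (x x' : ℝ → ℝ × ℝ)
    (hx : ∀ s, HasDerivAt x (x' s) s) (hx' : Continuous x')
    (hD : ∀ s ∈ Set.Icc (0:ℝ) 1,
      x s ∉ {p : ℝ × ℝ | p.2 = 0 ∧ -1 ≤ p.1 ∧ p.1 ≤ 1})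
    (h0 : x 0 = (0, -1)) (h1 : x 1 = (0, 1)) :
    ((∃ s₁ ∈ Set.Icc (0:ℝ) 1, 0 < (x' s₁).1) ∧
      (∃ s₂ ∈ Set.Icc (0:ℝ) 1, (x' s₂).1 < 0)) ∧
    ∀ lam : ℝ × ℝ → ℝ,
      ContinuousOn lam {p : ℝ × ℝ | p.2 = 0 ∧ -1 ≤ p.1 ∧ p.1 ≤ 1}ᶜ →
      (∀ p ∉ {p : ℝ × ℝ | p.2 = 0 ∧ -1 ≤ p.1 ∧ p.1 ≤ 1}, 0 < lam p) →
      ((∃ s₁ ∈ Set.Icc (0:ℝ) 1, 0 < lam (x s₁) * (x' s₁).1) ∧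
        (∃ s₂ ∈ Set.Icc (0:ℝ) 1, lam (x s₂) * (x' s₂).1 < 0) ∧
        ¬ (∀ s ∈ Set.Icc (0:ℝ) 1, lam (x s) * (x' s).1 = 0) ∧
        ¬ (∃ c : ℝ, ∀ s ∈ Set.Icc (0:ℝ) 1, lam (x s) * (x' s).1 = c)) := by
  -- first coordinate derivative facts
  have hfst : ∀ s : ℝ, HasDerivAt (fun t => (x t).1) ((x' s).1) s := fun s =>
    (hx s).fst
  have hsnd : ∀ s : ℝ, HasDerivAt (fun t => (x t).2) ((x' s).2) s := fun s =>
    (hx s).snd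
  have hcont2 : ContinuousOn (fun t => (x t).2) (Set.Icc (0:ℝ) 1) :=
    (continuous_iff_continuousAt.2 fun s => (hsnd s).continuousAt).continuousOn
  have hcont1 : ∀ a b : ℝ, ContinuousOn (fun t => (x t).1) (Set.Icc a b) :=
    fun a b => (continuous_iff_continuousAt.2 fun s => (hfst s).continuousAt).continuousOn
  -- find s0 with x₂(s0) = 0
  have hiv : (0:ℝ) ∈ Set.Icc ((x 0).2) ((x 1).2) := by
    rw [h0, h1]; constructor <;> norm_num
  obtain ⟨s0, hs0mem, hs0⟩ := intermediate_value_Icc (by norm_num : (0:ℝ) ≤ 1) hcont2 hiv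
  have hs0ne0 : s0 ≠ 0 := by
    intro h; rw [h] at hs0; simp [h0] at hs0
  have hs0ne1 : s0 ≠ 1 := by
    intro h; rw [h] at hs0; simp [h1] at hs0
  have hs0lt : 0 < s0 := lt_of_le_of_ne hs0mem.1 (Ne.symm hs0ne0)
  have hs0lt1 : s0 < 1 := lt_of_le_of_ne hs0mem.2 hs0ne1
  have hbig : (x s0).1 > 1 ∨ (x s0).1 < -1 := by
    have := hD s0 hs0mem
    simp only [Set.mem_setOf_eq, not_and, not_le] at this
    rcases le_or_gt (-1 : ℝ) ((x s0).1) with h' | h'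
    · exact Or.inl (this hs0 h')
    · exact Or.inr h'
  -- MVT on [0, s0] and [s0, 1]
  obtain ⟨a, ha, hda⟩ := exists_hasDerivAt_eq_slope (fun t => (x t).1)
    (fun t => (x' t).1) hs0lt (hcont1 0 s0) (fun t _ => hfst t)
  obtain ⟨b, hb, hdb⟩ := exists_hasDerivAt_eq_slope (fun t => (x t).1)
    (fun t => (x' t).1) hs0lt1 (hcont1 s0 1) (fun t _ => hfst t)
  have hx0 : (x 0).1 = 0 := by rw [h0]
  have hx1 : (x 1).1 = 0 := by rw [h1]
  rw [hx0] at hda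
  rw [hx1] at hdb
  have hamem : a ∈ Set.Icc (0:ℝ) 1 :=
    ⟨ha.1.le, ha.2.le.trans hs0mem.2⟩
  have hbmem : b ∈ Set.Icc (0:ℝ) 1 :=
    ⟨hs0mem.1.trans hb.1.le, hb.2.le⟩
  have key : (0 < (x' a).1 ∧ (x' b).1 < 0) ∨ ((x' a).1 < 0 ∧ 0 < (x' b).1) := by
    rcases hbig with h | h
    · left
      constructor
      · rw [hda]; apply div_pos <;> linarith
      · rw [hdb]
        apply div_neg_of_neg_of_pos <;> [linarith; linarith]
    · right
      constructor
      · rw [hda]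
        apply div_neg_of_neg_of_pos <;> [linarith; linarith]
      · rw [hdb]
        apply div_pos <;> linarith
  have main : (∃ s₁ ∈ Set.Icc (0:ℝ) 1, 0 < (x' s₁).1) ∧
      (∃ s₂ ∈ Set.Icc (0:ℝ) 1, (x' s₂).1 < 0) := by
    rcases key with ⟨h1', h2'⟩ | ⟨h1', h2'⟩
    · exact ⟨⟨a, hamem, h1'⟩, ⟨b, hbmem, h2'⟩⟩
    · exact ⟨⟨b, hbmem, h2'⟩, ⟨a, hamem, h1'⟩⟩
  refine ⟨main, fun lam _ hpos => ?_⟩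
  obtain ⟨⟨s₁, hs₁, hp⟩, ⟨s₂, hs₂, hn⟩⟩ := main
  have hl1 : 0 < lam (x s₁) := hpos _ (hD s₁ hs₁)
  have hl2 : 0 < lam (x s₂) := hpos _ (hD s₂ hs₂)
  have hP : 0 < lam (x s₁) * (x' s₁).1 := mul_pos hl1 hp
  have hN : lam (x s₂) * (x' s₂).1 < 0 := mul_neg_of_pos_of_neg hl2 hn
  refine ⟨⟨s₁, hs₁, hP⟩, ⟨s₂, hs₂, hN⟩, ?_, ?_⟩
  · intro h
    exact absurd (h s₁ hs₁) (ne_of_gt hP)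
  · rintro ⟨c, hc⟩
    have := hc s₁ hs₁
    have := hc s₂ hs₂
    linarith
end

section
/- Define g : ℝ → ℝ by g(u) = −cos³u for u < π and g(u) = 1 for u ≥ π, and define δ : ℝ³ → ℝ³ by δ(x₁,x₂,x₃) = (g(x₁), 0, 0). Let x : [0,1] → ℝ³ be a C¹ curve with x(0) = (0,0,0) and x(1) = (3π/2, 0, 0). Then there exist s₁, s₂ ∈ [0,1] with ⟨δ(x(s₁)), x'(s₁)⟩ < 0 and ⟨δ(x(s₂)), x'(s₂)⟩ > 0. In particular, the function s ↦ ⟨δ(x(s)), x'(s)⟩ does not have constant sign, is not identically zero, and is not constant. -/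
open Real Set RealInnerProductSpace

/-- The core of counterexample (c) in Section 7 of the paper: with
`g(u) = −cos³u` for `u < π`, `g(u) = 1` for `u ≥ π`, and `δ(x₁,x₂,x₃) = (g(x₁),0,0)`,
along every `C¹` curve in `ℝ³` from `(0,0,0)` to `(3π/2,0,0)` the function
`s ↦ ⟨δ(x(s)),x'(s)⟩` takes both a negative and a positive value; in particular it does not
have constant sign, is not identically zero, and is not constant. -/
theorem stmt_15 (g : ℝ → ℝ)
    (hg₁ : ∀ u : ℝ, u < π → g u = -(Real.cos u) ^ 3)
    (hg₂ : ∀ u : ℝ, π ≤ u → g u = 1)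
    (δ : EuclideanSpace ℝ (Fin 3) → EuclideanSpace ℝ (Fin 3))
    (hδ : ∀ y, δ y = ![g (y 0), 0, 0])
    (x x' : ℝ → EuclideanSpace ℝ (Fin 3))
    (hx : ∀ s, HasDerivAt x (x' s) s) (hx' : Continuous x')
    (h0 : x 0 = WithLp.toLp 2 (![0, 0, 0] : Fin 3 → ℝ)) (h1 : x 1 = WithLp.toLp 2 ![3 * π / 2, 0, 0]) :
    (∃ s₁ ∈ Set.Icc (0:ℝ) 1, ⟪δ (x s₁), x' s₁⟫ < 0) ∧
    (∃ s₂ ∈ Set.Icc (0:ℝ) 1, 0 < ⟪δ (x s₂), x' s₂⟫) ∧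
    ¬ (∀ s ∈ Set.Icc (0:ℝ) 1, ⟪δ (x s), x' s⟫ = 0) ∧
    ¬ (∃ c : ℝ, ∀ s ∈ Set.Icc (0:ℝ) 1, ⟪δ (x s), x' s⟫ = c) := by
  have hπ : (0:ℝ) < π := Real.pi_pos
  set f : ℝ → ℝ := fun s => x s 0 with hf_def
  set f' : ℝ → ℝ := fun s => x' s 0 with hf'_def
  have hf : ∀ s, HasDerivAt f (f' s) s := by
    intro s
    have := ((EuclideanSpace.proj (0 : Fin 3) : EuclideanSpace ℝ (Fin 3) →L[ℝ] ℝ)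
      ).hasFDerivAt.comp_hasDerivAt s (hx s)
    simp [Function.comp] at this; exact this
  have hfc : Continuous f := continuous_iff_continuousAt.2 fun s => (hf s).continuousAt
  have hinner : ∀ s, ⟪δ (x s), x' s⟫ = g (f s) * f' s := by
    intro s
    simp [hδ, PiLp.inner_apply, Fin.sum_univ_three, RCLike.inner_apply]; exact mul_comm _ _
  set G : ℝ → ℝ := fun u => if u < π then -(Real.sin u - Real.sin u ^ 3 / 3) else u - π
    with hG_def
  have hG1 : ∀ u : ℝ, HasDerivAt (fun v => -(Real.sin v - Real.sin v ^ 3 / 3))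
      (-(Real.cos u) ^ 3) u := by
    intro u
    have h2 : HasDerivAt (fun v => Real.sin v ^ 3) (3 * Real.sin u ^ 2 * Real.cos u) u := by
      have := ((Real.hasDerivAt_sin u).pow 3); exact (show HasDerivAt (fun v => Real.sin v ^ 3) _ u from this).congr_deriv (by ring)
    have h1 : HasDerivAt (fun v => Real.sin v - Real.sin v ^ 3 / 3)
        (Real.cos u - 3 * Real.sin u ^ 2 * Real.cos u / 3) u := by
      have := (Real.hasDerivAt_sin u).sub (h2.div_const 3); exact this
    have h3 := h1.neg
    refine (show HasDerivAt (fun v => -(Real.sin v - Real.sin v ^ 3 / 3)) _ u from h3).congr_deriv ?_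
    have hs : Real.sin u ^ 2 = 1 - Real.cos u ^ 2 := by
      linarith [Real.sin_sq_add_cos_sq u]
    rw [hs]; ring
  have hGderiv : ∀ u : ℝ, HasDerivAt G (g u) u := by
    intro u
    rcases lt_trichotomy u π with h | h | h
    · have heq : G =ᶠ[nhds u] (fun v => -(Real.sin v - Real.sin v ^ 3 / 3)) := by
        filter_upwards [Iio_mem_nhds h] with v hv
        simp only [hG_def]
        rw [if_pos (mem_Iio.mp hv)]
      rw [hg₁ u h]
      exact (hG1 u).congr_of_eventuallyEq heq
    · subst h
      rw [hg₂ π le_rfl]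
      have hcosπ : -(Real.cos π) ^ 3 = 1 := by
        rw [Real.cos_pi]; norm_num
      have hGπ : G π = 0 := by
        simp only [hG_def]
        rw [if_neg (lt_irrefl π)]; ring
      have hle : HasDerivWithinAt G 1 (Iic π) π := by
        rw [← hcosπ]
        refine ((hG1 π).hasDerivWithinAt).congr ?_ ?_
        · intro v hv
          rcases (mem_Iic.mp hv).lt_or_eq with h' | h'
          · simp only [hG_def]; rw [if_pos h']
          · subst h'; rw [hGπ]; simp
        · rw [hGπ]; simp
      have hge : HasDerivWithinAt G 1 (Ici π) π := by
        refine (((hasDerivAt_id π).sub_const π).hasDerivWithinAt).congr ?_ ?_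
        · intro v hv
          simp only [hG_def, id_eq]
          rw [if_neg (not_lt.2 (mem_Ici.mp hv))]
        · rw [hGπ]; simp
      have := hle.union hge
      rwa [Iic_union_Ici, hasDerivWithinAt_univ] at this
    · have heq : G =ᶠ[nhds u] (fun v => v - π) := by
        filter_upwards [Ioi_mem_nhds h] with v hv
        simp only [hG_def]
        rw [if_neg (not_lt.2 (le_of_lt (mem_Ioi.mp hv)))]
      rw [hg₂ u h.le]
      exact ((hasDerivAt_id u).sub_const π).congr_of_eventuallyEq heq
  have hF : ∀ s, HasDerivAt (G ∘ f) (g (f s) * f' s) s := fun s =>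
    (hGderiv (f s)).comp s (hf s)
  have hFc : Continuous (G ∘ f) := continuous_iff_continuousAt.2 fun s => (hF s).continuousAt
  have hf0 : f 0 = 0 := by simp [hf_def, h0]
  have hf1 : f 1 = 3 * π / 2 := by simp [hf_def, h1]
  have hG0 : G 0 = 0 := by
    simp only [hG_def]
    rw [if_pos hπ]; simp
  have hGhalf : G (π / 2) = -(2/3) := by
    simp only [hG_def]
    rw [if_pos (half_lt_self hπ), Real.sin_pi_div_two]; norm_num
  have hG32 : G (3 * π / 2) = π / 2 := by
    simp only [hG_def]
    rw [if_neg (by nlinarith)]; ring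
  have hIVT : (π / 2) ∈ f '' (Icc 0 1) := by
    apply intermediate_value_Icc (by norm_num) (hfc.continuousOn)
    rw [hf0, hf1]
    constructor <;> nlinarith
  obtain ⟨s₀, hs₀mem, hs₀⟩ := hIVT
  have hs₀pos : 0 < s₀ := by
    rcases hs₀mem.1.lt_or_eq with h | h
    · exact h
    · exfalso; rw [← h, hf0] at hs₀; nlinarith
  obtain ⟨c₁, hc₁mem, hc₁⟩ := exists_hasDerivAt_eq_slope (G ∘ f) (fun s => g (f s) * f' s)
    hs₀pos (hFc.continuousOn) (fun y _ => hF y)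
  have hneg : g (f c₁) * f' c₁ < 0 := by
    rw [hc₁]
    have e1 : (G ∘ f) s₀ = -(2/3) := by simp only [Function.comp_apply, hs₀, hGhalf]
    have e0 : (G ∘ f) 0 = 0 := by simp only [Function.comp_apply, hf0, hG0]
    rw [e1, e0]
    apply div_neg_of_neg_of_pos
    · norm_num
    · linarith
  obtain ⟨c₂, hc₂mem, hc₂⟩ := exists_hasDerivAt_eq_slope (G ∘ f) (fun s => g (f s) * f' s)
    (by norm_num : (0:ℝ) < 1) (hFc.continuousOn) (fun y _ => hF y)
  have hpos : 0 < g (f c₂) * f' c₂ := by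
    rw [hc₂]
    have e1 : (G ∘ f) 1 = π / 2 := by simp only [Function.comp_apply, hf1, hG32]
    have e0 : (G ∘ f) 0 = 0 := by simp only [Function.comp_apply, hf0, hG0]
    rw [e1, e0]
    apply div_pos <;> linarith
  have hc₁Icc : c₁ ∈ Icc (0:ℝ) 1 := ⟨hc₁mem.1.le, hc₁mem.2.le.trans hs₀mem.2⟩
  have hc₂Icc : c₂ ∈ Icc (0:ℝ) 1 := ⟨hc₂mem.1.le, hc₂mem.2.le⟩
  refine ⟨⟨c₁, hc₁Icc, by rw [hinner]; exact hneg⟩,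
          ⟨c₂, hc₂Icc, by rw [hinner]; exact hpos⟩, ?_, ?_⟩
  · intro h
    have := h c₁ hc₁Icc
    rw [hinner] at this
    linarith
  · rintro ⟨c, hc⟩
    have h1 := hc c₁ hc₁Icc
    have h2 := hc c₂ hc₂Icc
    rw [hinner] at h1 h2
    linarith
end

section
/- Fix N ≥ 1 and a continuous map δ : ℝ^N → ℝ^N. Let x, x₁, x₂, … : [0,1] → ℝ^N be C¹ curves such that xₙ → x uniformly on [0,1] and ∫₀¹ |xₙ'(s) − x'(s)|² ds → 0, and let t₁, t₂, … : [0,1] → ℝ be C¹ functions with sup_n ∫₀¹ tₙ'(s)² ds < ∞. Suppose that for every n there is a constant kₙ ∈ ℝ with (1/n) tₙ'(s) − ⟨δ(xₙ(s)), xₙ'(s)⟩ = kₙ for all s ∈ [0,1]. Then the function s ↦ ⟨δ(x(s)), x'(s)⟩ is constant on [0,1]. -/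
open Real Set Filter RealInnerProductSpace MeasureTheory

private lemma abs_int_le_int {f h : ℝ → ℝ} (hf : Continuous f) (hh : Continuous h)
    {a : ℝ} (ha : a ∈ Set.Icc (0:ℝ) 1)
    (hb : ∀ s ∈ Set.Icc (0:ℝ) 1, |f s| ≤ h s) :
    |∫ s in (0:ℝ)..a, f s| ≤ ∫ s in (0:ℝ)..1, h s := by
  obtain ⟨ha0, ha1⟩ := ha
  have h0 : ∀ s ∈ Set.Icc a (1:ℝ), 0 ≤ h s := fun s hs =>
    le_trans (abs_nonneg _) (hb s ⟨ha0.trans hs.1, hs.2⟩)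
  calc |∫ s in (0:ℝ)..a, f s| ≤ ∫ s in (0:ℝ)..a, |f s| :=
        intervalIntegral.abs_integral_le_integral_abs ha0
    _ ≤ ∫ s in (0:ℝ)..a, h s :=
        intervalIntegral.integral_mono_on ha0 (hf.abs.intervalIntegrable _ _)
          (hh.intervalIntegrable _ _) (fun s hs => hb s ⟨hs.1, hs.2.trans ha1⟩)
    _ ≤ ∫ s in (0:ℝ)..1, h s := by
        rw [← intervalIntegral.integral_add_adjacent_intervals
          (hh.intervalIntegrable 0 a) (hh.intervalIntegrable a 1)]
        have := intervalIntegral.integral_nonneg (f := h) (μ := MeasureTheory.volume) ha1 h0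
        linarith

private lemma l1_le_of_l2 {f : ℝ → ℝ} (hf : Continuous f) {t : ℝ} (ht : 0 < t) :
    (∫ s in (0:ℝ)..1, |f s|) ≤ t / 2 + (∫ s in (0:ℝ)..1, (f s) ^ 2) / (2 * t) := by
  have h1 : (∫ s in (0:ℝ)..1, |f s|) ≤ ∫ s in (0:ℝ)..1, (t / 2 + (f s) ^ 2 / (2 * t)) := by
    refine intervalIntegral.integral_mono_on zero_le_one (hf.abs.intervalIntegrable _ _)
      (((continuous_const.add ((hf.pow 2).div_const _))).intervalIntegrable _ _) ?_
    intro s _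
    rw [abs_le]
    have hne : (2*t) ≠ 0 := by positivity
    have hdm : (f s)^2 / (2*t) * (2*t) = (f s)^2 := div_mul_cancel₀ _ hne
    constructor <;> nlinarith [sq_nonneg (f s - t), sq_nonneg (f s + t), ht]
  calc (∫ s in (0:ℝ)..1, |f s|) ≤ _ := h1
    _ = t / 2 + (∫ s in (0:ℝ)..1, (f s) ^ 2) / (2 * t) := by
        rw [intervalIntegral.integral_add (f := fun _ => t / 2) (g := fun s => (f s) ^ 2 / (2 * t))
          (continuous_const.intervalIntegrable _ _)
          (((hf.pow 2).div_const _).intervalIntegrable _ _),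
          intervalIntegral.integral_const, intervalIntegral.integral_div]
        simp

/-- The key limit step in the proof of Theorem 1.2 of the paper: if `C¹` curves `xₙ`
converge to `x` uniformly on `[0,1]` with `xₙ' → x'` in `L²(0,1)`, the time derivatives
`tₙ'` are bounded in `L²(0,1)`, and each `n ≥ 1` satisfies the conservation law
`(1/n) tₙ' − ⟨δ(xₙ),xₙ'⟩ ≡ kₙ` of the perturbed metric, then the limit curve satisfies
the conservation law of the lightlike metric: `⟨δ(x),x'⟩` is constant on `[0,1]`. -/
theorem stmt_17 (N : ℕ) (hN : 1 ≤ N)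
    (δ : EuclideanSpace ℝ (Fin N) → EuclideanSpace ℝ (Fin N)) (hδ : Continuous δ)
    (x x' : ℝ → EuclideanSpace ℝ (Fin N))
    (hx : ∀ s, HasDerivAt x (x' s) s) (hx' : Continuous x')
    (X X' : ℕ → ℝ → EuclideanSpace ℝ (Fin N))
    (hX : ∀ n s, HasDerivAt (X n) (X' n s) s) (hX' : ∀ n, Continuous (X' n))
    (T T' : ℕ → ℝ → ℝ)
    (hT : ∀ n s, HasDerivAt (T n) (T' n s) s) (hT' : ∀ n, Continuous (T' n))
    (hunif : TendstoUniformlyOn X x atTop (Set.Icc (0:ℝ) 1))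
    (hL2 : Tendsto (fun n => ∫ s in (0:ℝ)..1, ‖X' n s - x' s‖ ^ 2) atTop (nhds 0))
    (hbound : ∃ M : ℝ, ∀ n : ℕ, (∫ s in (0:ℝ)..1, (T' n s) ^ 2) ≤ M)
    (hcons : ∀ n : ℕ, 1 ≤ n → ∃ k : ℝ, ∀ s ∈ Set.Icc (0:ℝ) 1,
      (1 / (n : ℝ)) * T' n s - ⟪δ (X n s), X' n s⟫ = k) :
    ∃ c : ℝ, ∀ s ∈ Set.Icc (0:ℝ) 1, ⟪δ (x s), x' s⟫ = c := by
  obtain ⟨M, hM⟩ := hbound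
  have hxc : Continuous x := continuous_iff_continuousAt.2 fun s => (hx s).continuousAt
  have hXc : ∀ n, Continuous (X n) :=
    fun n => continuous_iff_continuousAt.2 fun s => (hX n s).continuousAt
  set g : ℝ → ℝ := fun s => ⟪δ (x s), x' s⟫ with hgdef
  have hgc : Continuous g := (hδ.comp hxc).inner hx'
  have hgnc : ∀ n, Continuous (fun s => (⟪δ (X n s), X' n s⟫ : ℝ)) :=
    fun n => (hδ.comp (hXc n)).inner (hX' n)
  -- bound on δ along x
  obtain ⟨C₀, hC₀⟩ := isCompact_Icc.exists_bound_of_continuousOn (hδ.comp hxc).continuousOn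
  set C : ℝ := max C₀ 0 with hCdef
  have hC : ∀ s ∈ Set.Icc (0:ℝ) 1, ‖δ (x s)‖ ≤ C := fun s hs => (hC₀ s hs).trans (le_max_left _ _)
  have hCnn : 0 ≤ C := le_max_right _ _
  -- compact set and uniform continuity
  set K : Set (EuclideanSpace ℝ (Fin N)) := Metric.cthickening 1 (x '' Set.Icc 0 1) with hKdef
  have hKcomp : IsCompact K := (isCompact_Icc.image hxc).cthickening
  have huc := Metric.uniformContinuousOn_iff.1
    (hKcomp.uniformContinuousOn_of_continuous hδ.continuousOn)
  -- main convergence estimate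
  have conv : ∀ ε > 0, ∀ᶠ n in atTop, ∀ a ∈ Set.Icc (0:ℝ) 1,
      |∫ s in (0:ℝ)..a, ((⟪δ (X n s), X' n s⟫ : ℝ) - g s)| ≤ ε := by
    intro ε hε
    set D : ℝ := (∫ s in (0:ℝ)..1, ‖x' s‖) + 1 with hDdef
    have hInn : 0 ≤ ∫ s in (0:ℝ)..1, ‖x' s‖ :=
      intervalIntegral.integral_nonneg zero_le_one (fun s _ => norm_nonneg _)
    have hD1 : 1 ≤ D := by simp only [hDdef]; linarith
    have hDpos : 0 < D := by linarith
    set η : ℝ := ε / (2 * (C + 1)) with hηdef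
    have hηpos : 0 < η := by positivity
    set ε₁ : ℝ := ε / (2 * D) with hε₁def
    have hε₁pos : 0 < ε₁ := by positivity
    obtain ⟨r, hr, hmod⟩ := huc ε₁ hε₁pos
    have E1 : ∀ᶠ n in atTop, ∀ s ∈ Set.Icc (0:ℝ) 1, dist (x s) (X n s) < min r 1 :=
      Metric.tendstoUniformlyOn_iff.1 hunif _ (lt_min hr one_pos)
    have E2 : ∀ᶠ n in atTop, (∫ s in (0:ℝ)..1, ‖X' n s - x' s‖ ^ 2) < min (η ^ 2) 1 :=
      hL2.eventually (Filter.Tendsto.eventually_lt_const (by positivity) tendsto_id)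
    filter_upwards [E1, E2] with n h1 h2 a ha
    set u : ℝ → ℝ := fun s => ‖X' n s - x' s‖ with hudef
    have hucont : Continuous u := ((hX' n).sub hx').norm
    have hu2 : (∫ s in (0:ℝ)..1, (u s) ^ 2) < min (η ^ 2) 1 := h2
    have huabs : ∀ s, |u s| = u s := fun s => abs_of_nonneg (norm_nonneg _)
    have hIu_le : ∀ t : ℝ, 0 < t →
        (∫ s in (0:ℝ)..1, u s) ≤ t / 2 + (∫ s in (0:ℝ)..1, (u s) ^ 2) / (2 * t) := by
      intro t htp
      have := l1_le_of_l2 hucont htp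
      simpa [huabs] using this
    have hIuη : (∫ s in (0:ℝ)..1, u s) ≤ η := by
      have hle := hIu_le η hηpos
      have h2' : (∫ s in (0:ℝ)..1, (u s) ^ 2) ≤ η ^ 2 := (hu2.trans_le (min_le_left _ _)).le
      have e : η / 2 + η ^ 2 / (2 * η) = η := by field_simp; ring
      have : (∫ s in (0:ℝ)..1, (u s) ^ 2) / (2 * η) ≤ η ^ 2 / (2 * η) := by
        apply div_le_div_of_nonneg_right h2' ?_ |>.trans_eq rfl
        positivity
      linarith
    have hIu1 : (∫ s in (0:ℝ)..1, u s) ≤ 1 := by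
      have hle := hIu_le 1 one_pos
      have h2' : (∫ s in (0:ℝ)..1, (u s) ^ 2) ≤ 1 := (hu2.trans_le (min_le_right _ _)).le
      have : (∫ s in (0:ℝ)..1, (u s) ^ 2) / (2 * 1) ≤ 1 / (2 * 1) := by
        apply div_le_div_of_nonneg_right h2'
        norm_num
      linarith
    have hXD : (∫ s in (0:ℝ)..1, ‖X' n s‖) ≤ D := by
      have hmono : (∫ s in (0:ℝ)..1, ‖X' n s‖) ≤ ∫ s in (0:ℝ)..1, (‖x' s‖ + u s) := by
        refine intervalIntegral.integral_mono_on zero_le_one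
          ((hX' n).norm.intervalIntegrable _ _)
          ((hx'.norm.add hucont).intervalIntegrable _ _) (fun s _ => ?_)
        calc ‖X' n s‖ = ‖x' s + (X' n s - x' s)‖ := by rw [add_sub_cancel]
          _ ≤ ‖x' s‖ + ‖X' n s - x' s‖ := norm_add_le _ _
      have hsum : (∫ s in (0:ℝ)..1, (‖x' s‖ + u s))
          = (∫ s in (0:ℝ)..1, ‖x' s‖) + ∫ s in (0:ℝ)..1, u s :=
        intervalIntegral.integral_add (hx'.norm.intervalIntegrable _ _)
          (hucont.intervalIntegrable _ _)
      rw [hDdef]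
      linarith [hsum ▸ hmono]
    have hpt : ∀ s ∈ Set.Icc (0:ℝ) 1,
        |(⟪δ (X n s), X' n s⟫ : ℝ) - g s| ≤ ε₁ * ‖X' n s‖ + C * u s := by
      intro s hs
      have hxK : x s ∈ K := Metric.self_subset_cthickening _ ⟨s, hs, rfl⟩
      have hdist := h1 s hs
      have hXK : X n s ∈ K :=
        Metric.mem_cthickening_of_dist_le _ (x s) 1 _ ⟨s, hs, rfl⟩
          (by rw [dist_comm]; exact (hdist.trans_le (min_le_right _ _)).le)
      have hδd : dist (δ (X n s)) (δ (x s)) < ε₁ :=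
        hmod _ hXK _ hxK (by rw [dist_comm]; exact hdist.trans_le (min_le_left _ _))
      have hsplit : (⟪δ (X n s), X' n s⟫ : ℝ) - g s
          = ⟪δ (X n s) - δ (x s), X' n s⟫ + ⟪δ (x s), X' n s - x' s⟫ := by
        simp only [hgdef, inner_sub_left, inner_sub_right]; ring
      rw [hsplit]
      calc |(⟪δ (X n s) - δ (x s), X' n s⟫ : ℝ) + ⟪δ (x s), X' n s - x' s⟫|
          ≤ |(⟪δ (X n s) - δ (x s), X' n s⟫ : ℝ)| + |(⟪δ (x s), X' n s - x' s⟫ : ℝ)| :=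
            abs_add_le _ _
        _ ≤ ‖δ (X n s) - δ (x s)‖ * ‖X' n s‖ + ‖δ (x s)‖ * ‖X' n s - x' s‖ :=
            add_le_add (abs_real_inner_le_norm _ _) (abs_real_inner_le_norm _ _)
        _ ≤ ε₁ * ‖X' n s‖ + C * u s := by
            have hd := hδd
            rw [dist_eq_norm] at hd
            exact add_le_add (mul_le_mul_of_nonneg_right hd.le (norm_nonneg _))
              (mul_le_mul_of_nonneg_right (hC s hs) (norm_nonneg _))
    have hmain := abs_int_le_int ((hgnc n).sub hgc)
      ((continuous_const.mul (hX' n).norm).add (continuous_const.mul hucont)) ha hpt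
    have hIXnn : 0 ≤ ∫ s in (0:ℝ)..1, ‖X' n s‖ :=
      intervalIntegral.integral_nonneg zero_le_one (fun s _ => norm_nonneg _)
    have hIunn : 0 ≤ ∫ s in (0:ℝ)..1, u s :=
      intervalIntegral.integral_nonneg zero_le_one (fun s _ => norm_nonneg _)
    calc |∫ s in (0:ℝ)..a, ((⟪δ (X n s), X' n s⟫ : ℝ) - g s)|
        ≤ ∫ s in (0:ℝ)..1, (ε₁ * ‖X' n s‖ + C * u s) := hmain
      _ = ε₁ * (∫ s in (0:ℝ)..1, ‖X' n s‖) + C * (∫ s in (0:ℝ)..1, u s) := by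
          rw [intervalIntegral.integral_add (f := fun s => ε₁ * ‖X' n s‖) (g := fun s => C * u s)
            ((continuous_const.mul (hX' n).norm).intervalIntegrable _ _)
            ((continuous_const.mul hucont).intervalIntegrable _ _),
            intervalIntegral.integral_const_mul, intervalIntegral.integral_const_mul]
      _ ≤ ε₁ * D + C * η :=
          add_le_add (mul_le_mul_of_nonneg_left hXD hε₁pos.le)
            (mul_le_mul_of_nonneg_left hIuη hCnn)
      _ ≤ ε := by
          have e1 : ε₁ * D = ε / 2 := by
            rw [hε₁def]; field_simp
          have hY : η * (2 * (C + 1)) = ε := by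
            rw [hηdef]; field_simp
          nlinarith [hηpos]
  -- limits of the integrals of the approximating conservation quantities
  have gInt : ∀ b c' : ℝ, IntervalIntegrable g MeasureTheory.volume b c' :=
    fun b c' => hgc.intervalIntegrable b c'
  have key : ∀ a ∈ Set.Icc (0:ℝ) 1,
      Tendsto (fun n => ∫ s in (0:ℝ)..a, (⟪δ (X n s), X' n s⟫ : ℝ)) atTop
        (nhds (∫ s in (0:ℝ)..a, g s)) := by
    intro a ha
    have hdiff : Tendsto (fun n => ∫ s in (0:ℝ)..a, ((⟪δ (X n s), X' n s⟫ : ℝ) - g s))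
        atTop (nhds 0) := by
      rw [Metric.tendsto_atTop]
      intro ε hε
      obtain ⟨n₀, hn₀⟩ := eventually_atTop.1 (conv (ε / 2) (half_pos hε))
      refine ⟨n₀, fun n hn => ?_⟩
      rw [Real.dist_eq, sub_zero]
      calc |∫ s in (0:ℝ)..a, ((⟪δ (X n s), X' n s⟫ : ℝ) - g s)|
          ≤ ε / 2 := by simpa using hn₀ n hn a ha
        _ < ε := by linarith
    have heq : ∀ n, (∫ s in (0:ℝ)..a, ((⟪δ (X n s), X' n s⟫ : ℝ) - g s))
        = (∫ s in (0:ℝ)..a, (⟪δ (X n s), X' n s⟫ : ℝ)) - ∫ s in (0:ℝ)..a, g s :=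
      fun n => intervalIntegral.integral_sub ((hgnc n).intervalIntegrable _ _) (gInt _ _)
    have h2 := (hdiff.congr heq).add_const (∫ s in (0:ℝ)..a, g s)
    simpa using h2
  set c : ℝ := ∫ s in (0:ℝ)..1, g s with hcdef
  have hMnn : 0 ≤ M := le_trans
    (intervalIntegral.integral_nonneg zero_le_one (fun s _ => sq_nonneg _)) (hM 0)
  have hTb : ∀ n : ℕ, ∀ b ∈ Set.Icc (0:ℝ) 1,
      |∫ s in (0:ℝ)..b, T' n s| ≤ (1 + M) / 2 := by
    intro n b hb
    have hpw : ∀ s ∈ Set.Icc (0:ℝ) 1, |T' n s| ≤ (1 + (T' n s) ^ 2) / 2 := by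
      intro s _
      rw [abs_le]
      constructor <;> nlinarith [sq_nonneg (T' n s - 1), sq_nonneg (T' n s + 1)]
    have h2 := abs_int_le_int (h := fun s => (1 + (T' n s) ^ 2) / 2) (hT' n)
      ((continuous_const.add ((hT' n).pow 2)).div_const 2) hb hpw
    have h3 : (∫ s in (0:ℝ)..1, (1 + (T' n s) ^ 2) / 2)
        = (1 + ∫ s in (0:ℝ)..1, (T' n s) ^ 2) / 2 := by
      rw [intervalIntegral.integral_div,
        intervalIntegral.integral_add (f := fun _ => (1:ℝ)) (g := fun s => (T' n s) ^ 2)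
          (continuous_const.intervalIntegrable _ _)
          (((hT' n).pow 2).intervalIntegrable _ _), intervalIntegral.integral_const]
      norm_num
    rw [h3] at h2
    have := hM n
    linarith
  have main : ∀ a ∈ Set.Icc (0:ℝ) 1, (∫ s in (0:ℝ)..a, g s) = c * a := by
    intro a ha
    have hid : ∀ n : ℕ, 1 ≤ n →
        |(∫ s in (0:ℝ)..a, (⟪δ (X n s), X' n s⟫ : ℝ))
          - a * (∫ s in (0:ℝ)..1, (⟪δ (X n s), X' n s⟫ : ℝ))| ≤ (1 + M) / n := by
      intro n hn
      obtain ⟨k, hk⟩ := hcons n hn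
      have hval : ∀ b ∈ Set.Icc (0:ℝ) 1, (∫ s in (0:ℝ)..b, (⟪δ (X n s), X' n s⟫ : ℝ))
          = (1 / (n : ℝ)) * (∫ s in (0:ℝ)..b, T' n s) - k * b := by
        intro b hb
        have hcong : Set.EqOn (fun s => (⟪δ (X n s), X' n s⟫ : ℝ))
            (fun s => (1 / (n : ℝ)) * T' n s - k) (Set.uIcc 0 b) := by
          intro s hs
          rw [Set.uIcc_of_le hb.1] at hs
          have := hk s ⟨hs.1, hs.2.trans hb.2⟩
          simp only
          linarith
        rw [intervalIntegral.integral_congr hcong,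
          intervalIntegral.integral_sub (f := fun s => (1 / (n : ℝ)) * T' n s) (g := fun _ => k)
            ((continuous_const.mul (hT' n)).intervalIntegrable _ _)
            (continuous_const.intervalIntegrable _ _),
          intervalIntegral.integral_const_mul, intervalIntegral.integral_const]
        simp [mul_comm]
      have hnpos : (0:ℝ) < n := by exact_mod_cast hn
      have ha1 : (1:ℝ) ∈ Set.Icc (0:ℝ) 1 := ⟨zero_le_one, le_refl 1⟩
      rw [hval a ha, hval 1 ha1]
      have hb1 := hTb n a ha
      have hb2 := hTb n 1 ha1
      have habs : ∀ z : ℝ, |z| ≤ (1 + M) / 2 → -( (1+M)/2) ≤ z ∧ z ≤ (1+M)/2 :=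
        fun z hz => abs_le.1 hz
      obtain ⟨hb1l, hb1r⟩ := habs _ hb1
      obtain ⟨hb2l, hb2r⟩ := habs _ hb2
      have hexp : (1 / (n : ℝ)) * (∫ s in (0:ℝ)..a, T' n s) - k * a
          - a * ((1 / (n : ℝ)) * (∫ s in (0:ℝ)..1, T' n s) - k * 1)
          = (1 / (n : ℝ)) * ((∫ s in (0:ℝ)..a, T' n s) - a * (∫ s in (0:ℝ)..1, T' n s)) := by
        ring
      rw [hexp, abs_mul, abs_of_nonneg (by positivity : (0:ℝ) ≤ 1 / (n:ℝ))]
      have haa : 0 ≤ a := ha.1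
      have haa1 : a ≤ 1 := ha.2
      have : |(∫ s in (0:ℝ)..a, T' n s) - a * (∫ s in (0:ℝ)..1, T' n s)| ≤ 1 + M := by
        rw [abs_le]
        constructor <;> nlinarith [abs_nonneg (∫ s in (0:ℝ)..1, T' n s)]
      calc (1 / (n : ℝ)) * |(∫ s in (0:ℝ)..a, T' n s) - a * (∫ s in (0:ℝ)..1, T' n s)|
          ≤ (1 / (n : ℝ)) * (1 + M) := by
            exact mul_le_mul_of_nonneg_left this (by positivity)
        _ = (1 + M) / n := by ring
    have t1 : Tendsto (fun n => (∫ s in (0:ℝ)..a, (⟪δ (X n s), X' n s⟫ : ℝ))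
        - a * (∫ s in (0:ℝ)..1, (⟪δ (X n s), X' n s⟫ : ℝ))) atTop
        (nhds ((∫ s in (0:ℝ)..a, g s) - a * c)) :=
      (key a ha).sub ((key 1 ⟨zero_le_one, le_refl 1⟩).const_mul a)
    have t2 : Tendsto (fun n => (∫ s in (0:ℝ)..a, (⟪δ (X n s), X' n s⟫ : ℝ))
        - a * (∫ s in (0:ℝ)..1, (⟪δ (X n s), X' n s⟫ : ℝ))) atTop (nhds 0) := by
      apply squeeze_zero_norm' (a := fun n : ℕ => (1 + M) / n)
      · filter_upwards [eventually_ge_atTop 1] with n hn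
        simpa using hid n hn
      · exact tendsto_const_div_atTop_nhds_zero_nat (1 + M)
    have := tendsto_nhds_unique t1 t2
    linarith [this]
  have hG : ∀ s : ℝ, HasDerivAt (fun b => ∫ t in (0:ℝ)..b, g t) (g s) s := fun s =>
    intervalIntegral.integral_hasDerivAt_right (gInt 0 s)
      hgc.stronglyMeasurable.stronglyMeasurableAtFilter hgc.continuousAt
  have hint : ∀ s ∈ Set.Ioo (0:ℝ) 1, g s = c := by
    intro s hs
    have hev : (fun b => ∫ t in (0:ℝ)..b, g t) =ᶠ[nhds s] (fun b => c * b) :=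
      eventually_of_mem (Ioo_mem_nhds hs.1 hs.2)
        (fun b hb => main b (Set.Ioo_subset_Icc_self hb))
    have hder1 : HasDerivAt (fun b => c * b) (g s) s := (hG s).congr_of_eventuallyEq hev.symm
    have hder2 : HasDerivAt (fun b => c * b) c s := by
      simpa using (hasDerivAt_id s).const_mul c
    exact hder1.unique hder2
  have hend : ∀ s₀ : ℝ, s₀ ∈ Set.Icc (0:ℝ) 1 → g s₀ = c := by
    intro s₀ hs₀
    rcases lt_or_ge 0 s₀ with h0 | h0
    · rcases lt_or_ge s₀ 1 with h1 | h1
      · exact hint s₀ ⟨h0, h1⟩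
      · have hs1 : s₀ = 1 := le_antisymm hs₀.2 h1
        subst hs1
        have hne : (nhdsWithin (1:ℝ) (Set.Ioo 0 1)).NeBot := by
          rw [← mem_closure_iff_nhdsWithin_neBot, closure_Ioo (zero_ne_one)]
          exact ⟨zero_le_one, le_refl 1⟩
        have t1 : Tendsto g (nhdsWithin (1:ℝ) (Set.Ioo 0 1)) (nhds (g 1)) :=
          hgc.continuousAt.continuousWithinAt.tendsto
        have t2 : Tendsto g (nhdsWithin (1:ℝ) (Set.Ioo 0 1)) (nhds c) := by
          refine Tendsto.congr' ?_ tendsto_const_nhds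
          filter_upwards [self_mem_nhdsWithin] with b hb
          exact (hint b hb).symm
        exact tendsto_nhds_unique t1 t2
    · have hs0 : s₀ = 0 := le_antisymm h0 hs₀.1
      subst hs0
      have hne : (nhdsWithin (0:ℝ) (Set.Ioo 0 1)).NeBot := by
        rw [← mem_closure_iff_nhdsWithin_neBot, closure_Ioo (zero_ne_one)]
        exact ⟨le_refl 0, zero_le_one⟩
      have t1 : Tendsto g (nhdsWithin (0:ℝ) (Set.Ioo 0 1)) (nhds (g 0)) :=
        hgc.continuousAt.continuousWithinAt.tendsto
      have t2 : Tendsto g (nhdsWithin (0:ℝ) (Set.Ioo 0 1)) (nhds c) := by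
        refine Tendsto.congr' ?_ tendsto_const_nhds
        filter_upwards [self_mem_nhdsWithin] with b hb
        exact (hint b hb).symm
      exact tendsto_nhds_unique t1 t2
  exact ⟨c, hend⟩
end
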